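/- Let n ≥ 1, let l₁, …, lₙ ≥ 1 be integers with L = ∑_j l_j, and let m₁, …, mₙ ∈ ℤ with ∑_j m_j < (n+1)·L − n. Then for every T ∈ ℂ, the torus integral ∯_{|z_j|=R} (∏_{j=1}^{n} z_j^{m_j}) / (∏_{j=1}^{n} (z_j·∏_{k=1}^{n} z_k − T)^{l_j}) dz tends to 0 as R → ∞ (the integrand being defined on the torus of radius R as soon as R^{n+1} > |T|). In the paper's notation, Res_∞(g_m) = 0 under the stated degree condition. -/

import Mathlib

open Complex MeasureTheory Filter

private lemma prod_zpow_eq_zpow_sum' {ι : Type*} (R : ℝ) (hR : R ≠ 0) (s : Finset ι)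
    (m : ι → ℤ) : ∏ j ∈ s, R ^ m j = R ^ (∑ j ∈ s, m j) := by
  classical
  induction s using Finset.induction with
  | empty => simp
  | @insert a s h ih => rw [Finset.prod_insert h, Finset.sum_insert h, zpow_add₀ hR, ih]

/-- (Lemma `lm:residue3` of the paper.) If `∑ m_j < (n+1)·∑ l_j − n`,
then for every `T ∈ ℂ` the torus integral
`∯_{|z_j|=R} ∏ z_j^{m_j} / ∏ (z_j ∏ z_k − T)^{l_j} dz` tends to `0` as `R → ∞`;
i.e. `Res_∞(g_m) = 0` under the stated degree condition. -/
theorem torus_integral_tendsto_zero (n : ℕ) (hn : 1 ≤ n)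
    (l : Fin n → ℕ) (hl : ∀ j, 1 ≤ l j) (m : Fin n → ℤ)
    (hm : (∑ j, m j) < ((n : ℤ) + 1) * (∑ j, (l j : ℤ)) - n) (T : ℂ) :
    Tendsto (fun R : ℝ =>
        ∯ z in T((0 : Fin n → ℂ), fun _ => R),
          (∏ j, z j ^ (m j)) /
            (∏ j, (z j * (∏ k, z k) - T) ^ (l j)))
      atTop (nhds 0) := by
  set S : ℤ := ∑ j, m j with hS
  set L : ℕ := ∑ j, l j with hLdef
  have hLZ : (L : ℤ) = ∑ j, (l j : ℤ) := by push_cast [hLdef]; rfl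
  set e : ℤ := (n : ℤ) + S - ((n : ℤ) + 1) * L with he_def
  have he : e < 0 := by rw [he_def, hLZ]; linarith
  rw [tendsto_zero_iff_norm_tendsto_zero]
  have hg : Tendsto (fun R : ℝ => ((2 * Real.pi) ^ n * 2 ^ L) * R ^ e) atTop (nhds 0) := by
    simpa using (tendsto_zpow_atTop_zero he).const_mul ((2 * Real.pi) ^ n * 2 ^ L)
  refine squeeze_zero' (Eventually.of_forall fun R => norm_nonneg _) ?_ hg
  filter_upwards [eventually_ge_atTop (max 1 (2 * ‖T‖))] with R hR
  have hR1 : (1 : ℝ) ≤ R := le_trans (le_max_left _ _) hR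
  have hR0 : (0 : ℝ) < R := lt_of_lt_of_le one_pos hR1
  have hT : 2 * ‖T‖ ≤ R := le_trans (le_max_right _ _) hR
  have hRn1 : R ≤ R ^ (n + 1) := le_self_pow₀ hR1 (Nat.succ_ne_zero n)
  have hTn : ‖T‖ ≤ R ^ (n + 1) / 2 := by linarith
  have hden : (0 : ℝ) < R ^ (n + 1) / 2 := by positivity
  -- pointwise bound on the torus
  have key : ∀ θ : Fin n → ℝ,
      ‖(fun z : Fin n → ℂ => (∏ j, z j ^ (m j)) /
          (∏ j, (z j * (∏ k, z k) - T) ^ (l j))) (torusMap 0 (fun _ => R) θ)‖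
        ≤ R ^ S / (R ^ (n + 1) / 2) ^ L := by
    intro θ
    set z : Fin n → ℂ := torusMap 0 (fun _ => R) θ with hz
    have hznorm : ∀ i, ‖z i‖ = R := by
      intro i
      simp [hz, torusMap, map_mul, Complex.norm_exp_ofReal_mul_I,
        abs_of_pos hR0]
    have hnum : ‖∏ j, z j ^ (m j)‖ = R ^ S := by
      rw [norm_prod]
      simp_rw [norm_zpow, hznorm]
      exact prod_zpow_eq_zpow_sum' R hR0.ne' _ m
    have hfac : ∀ j, R ^ (n + 1) / 2 ≤ ‖z j * (∏ k, z k) - T‖ := by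
      intro j
      have h1 : ‖z j * ∏ k, z k‖ = R ^ (n + 1) := by
        rw [norm_mul, norm_prod]
        simp_rw [hznorm]
        rw [Finset.prod_const, Finset.card_univ, Fintype.card_fin, pow_succ, mul_comm]
      have := norm_sub_norm_le (z j * ∏ k, z k) T
      rw [h1] at this
      linarith
    have hdenom : (R ^ (n + 1) / 2) ^ L ≤ ‖∏ j, (z j * (∏ k, z k) - T) ^ (l j)‖ := by
      rw [norm_prod]
      simp_rw [norm_pow]
      calc (R ^ (n + 1) / 2) ^ L = ∏ j, (R ^ (n + 1) / 2) ^ (l j) := by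
            rw [hLdef, ← Finset.prod_pow_eq_pow_sum]
        _ ≤ ∏ j, ‖z j * (∏ k, z k) - T‖ ^ (l j) := by
            apply Finset.prod_le_prod
            · intro j _; positivity
            · intro j _; exact pow_le_pow_left₀ hden.le (hfac j) _
    rw [norm_div, hnum]
    apply div_le_div_of_nonneg_left _ (by positivity) hdenom
    · positivity
  calc ‖∯ z in T((0 : Fin n → ℂ), fun _ => R),
        (∏ j, z j ^ (m j)) / (∏ j, (z j * (∏ k, z k) - T) ^ (l j))‖
      ≤ ((2 * Real.pi) ^ n * ∏ _i : Fin n, |R|) * (R ^ S / (R ^ (n + 1) / 2) ^ L) :=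
        norm_torusIntegral_le_of_norm_le_const key
    _ = ((2 * Real.pi) ^ n * 2 ^ L) * R ^ e := by
        have hprod : (∏ _i : Fin n, |R|) = R ^ n := by
          rw [Finset.prod_const, Finset.card_univ, Fintype.card_fin, abs_of_pos hR0]
        have hRe : R ^ e = R ^ n * R ^ S / R ^ ((n + 1) * L) := by
          rw [← zpow_natCast R n, ← zpow_natCast R ((n + 1) * L), ← zpow_add₀ hR0.ne',
            ← zpow_sub₀ hR0.ne']
          congr 1
        rw [hprod, hRe, div_pow, ← pow_mul]
        have h2 : (2 : ℝ) ^ L ≠ 0 := by positivity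
        have h3 : R ^ ((n + 1) * L) ≠ 0 := by positivity
        field_simp
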